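/- Let X be a Priestley space, let Y be an Esakia root system, and let f : Y → X be a continuous order-preserving map. Then there is a unique continuous p-morphism g : Y → CC(X) such that m ∘ g = f, where m : CC(X) → X sends each nonempty closed chain to its least element. Moreover, g is given by g(y) = f[↑y]. -/

import Mathlib

open Set TopologicalSpace

/-- The set of nonempty closed chains of a Priestley space `X`. -/
def CC (X : Type*) [TopologicalSpace X] [Preorder X] : Set (Set X) :=
  {C | C.Nonempty ∧ IsClosed C ∧ IsChain (· ≤ ·) C}

variable {X : Type*} [TopologicalSpace X] [Preorder X]

/-- `□A = {C ∈ CC(X) | C ⊆ A}`. -/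
def ccBox (A : Set X) : Set ↥(CC X) := {C | (C : Set X) ⊆ A}

/-- `◇A = {C ∈ CC(X) | C ∩ A ≠ ∅}`. -/
def ccDia (A : Set X) : Set ↥(CC X) := {C | ((C : Set X) ∩ A).Nonempty}

/-- The Vietoris topology on `CC X`, generated by the subbasis `{□V, ◇V | V clopen}`. -/
instance ccTop : TopologicalSpace ↥(CC X) :=
  generateFrom {S | ∃ V : Set X, IsClopen V ∧ (S = ccBox V ∨ S = ccDia V)}

/-- The order `⊴` on closed chains: `C₁ ⊴ C₂` iff `C₂ ⊆ C₁` and `C₂` is an upset in `C₁`. -/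
def lec (C₁ C₂ : Set X) : Prop :=
  C₂ ⊆ C₁ ∧ ∀ x ∈ C₂, ∀ y ∈ C₁, x ≤ y → y ∈ C₂

section Aux

lemma pr_isClosed_Ici {Z : Type*} [TopologicalSpace Z] [Preorder Z] [PriestleySpace Z]
    (x : Z) : IsClosed (Ici x) := by
  rw [← isOpen_compl_iff, isOpen_iff_forall_mem_open]
  intro y hy
  have hxy : ¬ x ≤ y := by simpa using hy
  obtain ⟨U, hU, hUup, hxU, hyU⟩ := exists_isClopen_upper_of_not_le hxy
  exact ⟨Uᶜ, fun z hz hz' => hz (hUup hz' hxU), hU.compl.isOpen, hyU⟩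

lemma pr_isClosed_Iic {Z : Type*} [TopologicalSpace Z] [Preorder Z] [PriestleySpace Z]
    (x : Z) : IsClosed (Iic x) := by
  rw [← isOpen_compl_iff, isOpen_iff_forall_mem_open]
  intro y hy
  have hyx : ¬ y ≤ x := by simpa using hy
  obtain ⟨U, hU, hUup, hyU, hxU⟩ := exists_isClopen_upper_of_not_le hyx
  exact ⟨U, fun z hz hz' => hxU (hUup hz' hz), hU.isOpen, hyU⟩

/-- A nonempty closed chain in a compact Priestley space has a least element. -/
lemma chain_has_least {Z : Type*} [TopologicalSpace Z] [PartialOrder Z] [CompactSpace Z]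
    [PriestleySpace Z] {T : Set Z} (hne : T.Nonempty) (hcl : IsClosed T)
    (hch : IsChain (· ≤ ·) T) : ∃ z ∈ T, ∀ t ∈ T, z ≤ t := by
  haveI : Nonempty ↥T := hne.to_subtype
  obtain ⟨z, hz⟩ := IsCompact.nonempty_iInter_of_directed_nonempty_isCompact_isClosed
    (fun t : T => T ∩ Iic (t : Z))
    (fun a b => by
      rcases eq_or_ne (a : Z) b with h | h
      · obtain rfl : a = b := Subtype.ext h
        exact ⟨a, subset_rfl, subset_rfl⟩
      · rcases hch a.2 b.2 h with h' | h'
        · exact ⟨a, subset_rfl, inter_subset_inter_right _ (Iic_subset_Iic.mpr h')⟩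
        · exact ⟨b, inter_subset_inter_right _ (Iic_subset_Iic.mpr h'), subset_rfl⟩)
    (fun t => ⟨t, t.2, le_refl _⟩)
    (fun t => (hcl.inter (pr_isClosed_Iic _)).isCompact)
    (fun t => hcl.inter (pr_isClosed_Iic _))
  simp only [mem_iInter, mem_inter_iff, mem_Iic] at hz
  exact ⟨z, (hz ⟨_, hne.some_mem⟩).1, fun t ht => (hz ⟨t, ht⟩).2⟩

end Aux

/-- Universal property of `CC(X)`: every continuous order-preserving map `f : Y → X`
from an Esakia root system `Y` lifts uniquely to a continuous p-morphism
`g : Y → CC(X)` with `m ∘ g = f`; moreover `g y = f[↑y]`. -/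
theorem stmt8 (X Y : Type*) [TopologicalSpace X] [PartialOrder X] [CompactSpace X]
    [PriestleySpace X] [TopologicalSpace Y] [PartialOrder Y] [CompactSpace Y]
    [PriestleySpace Y]
    (hEsa : ∀ V : Set Y, IsClopen V → IsClopen {x : Y | ∃ y ∈ V, x ≤ y})
    (hRoot : ∀ y : Y, IsChain (· ≤ ·) (Ici y))
    (f : Y → X) (hf : Continuous f) (hfm : Monotone f)
    (m : ↥(CC X) → X)
    (hm : ∀ C : ↥(CC X), m C ∈ (C : Set X) ∧ ∀ x ∈ (C : Set X), m C ≤ x) :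
    (∃! g : Y → ↥(CC X),
      Continuous g ∧
      (∀ y₁ y₂ : Y, y₁ ≤ y₂ → lec ((g y₁ : Set X)) ((g y₂ : Set X))) ∧
      (∀ y : Y, ∀ K : ↥(CC X), lec ((g y : Set X)) (K : Set X) → ∃ z, y ≤ z ∧ g z = K) ∧
      (∀ y : Y, m (g y) = f y)) ∧
    (∀ g : Y → ↥(CC X),
      (Continuous g ∧
        (∀ y₁ y₂ : Y, y₁ ≤ y₂ → lec ((g y₁ : Set X)) ((g y₂ : Set X))) ∧
        (∀ y : Y, ∀ K : ↥(CC X), lec ((g y : Set X)) (K : Set X) → ∃ z, y ≤ z ∧ g z = K) ∧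
        (∀ y : Y, m (g y) = f y)) →
      ∀ y : Y, (g y : Set X) = f '' Ici y) := by
  -- the characterization: any g satisfying the conditions has g y = f '' Ici y
  have hchar : ∀ g : Y → ↥(CC X),
      (Continuous g ∧
        (∀ y₁ y₂ : Y, y₁ ≤ y₂ → lec ((g y₁ : Set X)) ((g y₂ : Set X))) ∧
        (∀ y : Y, ∀ K : ↥(CC X), lec ((g y : Set X)) (K : Set X) → ∃ z, y ≤ z ∧ g z = K) ∧
        (∀ y : Y, m (g y) = f y)) →
      ∀ y : Y, (g y : Set X) = f '' Ici y := by
    rintro g ⟨-, hmono, hpm, hcomm⟩ y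
    apply Subset.antisymm
    · intro x hx
      have hKcc : (Ici x ∩ (g y : Set X)) ∈ CC X :=
        ⟨⟨x, le_refl x, hx⟩, (pr_isClosed_Ici x).inter (g y).2.2.1,
          ((g y).2.2.2).mono inter_subset_right⟩
      have hlec : lec (g y : Set X) (Ici x ∩ (g y : Set X)) :=
        ⟨inter_subset_right, fun a ha b hb hab => ⟨le_trans ha.1 hab, hb⟩⟩
      obtain ⟨z, hyz, hgz⟩ := hpm y ⟨_, hKcc⟩ hlec
      have hmx : m ⟨_, hKcc⟩ = x :=
        le_antisymm ((hm ⟨_, hKcc⟩).2 x ⟨le_refl x, hx⟩) ((hm ⟨_, hKcc⟩).1.1)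
      exact ⟨z, hyz, by rw [← hcomm z, hgz, hmx]⟩
    · rintro x ⟨a, hya, rfl⟩
      have hle := hmono y a hya
      have hfa : f a ∈ (g a : Set X) := by rw [← hcomm a]; exact (hm _).1
      exact hle.1 hfa
  -- the candidate map
  have hmemCC : ∀ y : Y, f '' Ici y ∈ CC X := fun y =>
    ⟨⟨f y, y, le_refl y, rfl⟩,
      (((pr_isClosed_Ici y).isCompact).image hf).isClosed,
      IsChain.image_of_map_rel (· ≤ ·) (· ≤ ·) f (fun _ _ h => hfm h) (hRoot y)⟩
  set g₀ : Y → ↥(CC X) := fun y => ⟨f '' Ici y, hmemCC y⟩ with hg₀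
  have hprop : Continuous g₀ ∧
      (∀ y₁ y₂ : Y, y₁ ≤ y₂ → lec ((g₀ y₁ : Set X)) ((g₀ y₂ : Set X))) ∧
      (∀ y : Y, ∀ K : ↥(CC X), lec ((g₀ y : Set X)) (K : Set X) → ∃ z, y ≤ z ∧ g₀ z = K) ∧
      (∀ y : Y, m (g₀ y) = f y) := by
    refine ⟨?_, ?_, ?_, ?_⟩
    · -- continuity
      rw [show (ccTop : TopologicalSpace ↥(CC X)) =
        generateFrom {S | ∃ V : Set X, IsClopen V ∧ (S = ccBox V ∨ S = ccDia V)} from rfl,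
        continuous_generateFrom_iff]
      rintro s ⟨V, hV, hs | hs⟩ <;> subst hs
      · -- box
        have : g₀ ⁻¹' ccBox V = {x : Y | ∃ y ∈ f ⁻¹' Vᶜ, x ≤ y}ᶜ := by
          ext y
          constructor
          · rintro h ⟨a, haV, hya⟩
            exact haV (h ⟨a, hya, rfl⟩)
          · rintro h x ⟨a, hya, rfl⟩
            by_contra hxV
            exact h ⟨a, hxV, hya⟩
        rw [this]
        exact (hEsa _ (hV.compl.preimage hf)).compl.isOpen
      · -- dia
        have : g₀ ⁻¹' ccDia V = {x : Y | ∃ y ∈ f ⁻¹' V, x ≤ y} := by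
          ext y
          simp only [mem_preimage, ccDia, mem_setOf_eq, mem_preimage]
          constructor
          · rintro ⟨x, ⟨a, hya, rfl⟩, hxV⟩
            exact ⟨a, hxV, hya⟩
          · rintro ⟨a, haV, hya⟩
            exact ⟨f a, ⟨a, hya, rfl⟩, haV⟩
        rw [this]
        exact (hEsa _ (hV.preimage hf)).isOpen
    · -- monotone
      intro y₁ y₂ h
      refine ⟨image_mono (f := f) (Ici_subset_Ici.mpr h), ?_⟩
      rintro x ⟨a, ha, rfl⟩ w ⟨b, hb, rfl⟩ hab
      rcases eq_or_ne a b with rfl | hne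
      · exact ⟨a, ha, rfl⟩
      rcases hRoot y₁ (le_trans h ha) hb hne with h' | h'
      · exact ⟨b, le_trans ha h', rfl⟩
      · exact ⟨a, ha, le_antisymm hab (hfm h')⟩
    · -- p-morphism back condition
      intro y K hK
      set T : Set Y := Ici y ∩ f ⁻¹' (K : Set X) with hT
      have hTcl : IsClosed T := (pr_isClosed_Ici y).inter (K.2.2.1.preimage hf)
      have hTch : IsChain (· ≤ ·) T := (hRoot y).mono inter_subset_left
      have hTne : T.Nonempty := by
        obtain ⟨x, hxK⟩ := K.2.1
        obtain ⟨a, hya, rfl⟩ := hK.1 hxK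
        exact ⟨a, hya, hxK⟩
      obtain ⟨z, hzT, hzle⟩ := chain_has_least hTne hTcl hTch
      refine ⟨z, hzT.1, Subtype.ext ?_⟩
      apply Subset.antisymm
      · rintro x ⟨b, hzb, rfl⟩
        exact hK.2 (f z) hzT.2 (f b) ⟨b, le_trans hzT.1 hzb, rfl⟩ (hfm hzb)
      · intro x hxK
        obtain ⟨a, hya, rfl⟩ := hK.1 hxK
        exact ⟨a, hzle a ⟨hya, hxK⟩, rfl⟩
    · -- m ∘ g₀ = f
      intro y
      refine le_antisymm ((hm (g₀ y)).2 (f y) ⟨y, le_refl y, rfl⟩) ?_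
      obtain ⟨a, hya, ha⟩ := (hm (g₀ y)).1
      exact ha ▸ hfm hya
  refine ⟨⟨g₀, hprop, fun g hg => ?_⟩, hchar⟩
  funext y
  exact Subtype.ext ((hchar g hg y).trans (hchar g₀ hprop y).symm)
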